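/- (Negative probabilities.) Let G be the complete graph K₄ with one edge removed (vertices {1,2,3,4}, edges (1,2),(2,3),(3,4),(4,1),(4,2)) with unit weights q_e = 1 for all e. Let e=(1,2) and e'=(2,3) be the two edges sharing vertex 2, and suppose ρ ∈ ℝ^{Ê} has positive entries with ρ_{(e,2)} ≠ ρ_{(e',2)}. Then for every γ ∈ (0,2) and every diagonal matrix D_A with all diagonal entries different from 1, the matrix M_A = (I−D_A)⁻¹(T_A−D_A) has at least one strictly negative entry; in particular M_A is not a probability transition matrix. -/

import Mathlib

open Matrix BigOperators

noncomputable section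

variable {V : Type*} [Fintype V] [DecidableEq V]

/-- The extended index set `Ê = {(e,i) : e ∈ E, i an endpoint of e}`. -/
abbrev Ehat (G : SimpleGraph V) [DecidableRel G.Adj] : Type _ :=
  {p : Sym2 V × V // p.1 ∈ G.edgeSet ∧ p.2 ∈ p.1}

/-- The `|Ê| × |V|` matrix `S`, with `S_{(e,i),j} = 1` iff `j = i`. -/
def Smat (G : SimpleGraph V) [DecidableRel G.Adj] : Matrix (Ehat G) V ℝ :=
  fun p j => if p.val.2 = j then 1 else 0

/-- The `|Ê| × |Ê|` block-diagonal matrix `Q`, whose block for edge `e = (i,j)` acts on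
coordinates `(e,i), (e,j)` as `q_e · [[1,-1],[-1,1]]`. -/
def Qmat (G : SimpleGraph V) [DecidableRel G.Adj] (q : Sym2 V → ℝ) :
    Matrix (Ehat G) (Ehat G) ℝ :=
  fun p p' =>
    if p.val.1 = p'.val.1 then (if p.val.2 = p'.val.2 then q p.val.1 else - q p.val.1) else 0

/-- The element `(e, i)` of `Ê` associated with an edge `e = (i,j)`. -/
def eFst {G : SimpleGraph V} [DecidableRel G.Adj] {i j : V} (h : G.Adj i j) : Ehat G :=
  ⟨(s(i,j), i), ⟨G.mem_edgeSet.mpr h, Sym2.mem_mk_left i j⟩⟩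

/-- The element `(e, j)` of `Ê` associated with an edge `e = (i,j)`. -/
def eSnd {G : SimpleGraph V} [DecidableRel G.Adj] {i j : V} (h : G.Adj i j) : Ehat G :=
  ⟨(s(i,j), j), ⟨G.mem_edgeSet.mpr h, Sym2.mem_mk_right i j⟩⟩

/-- For `(e,i) ∈ Ê` with `e = (i,j)`, the element `(e,j)` given by the other endpoint. -/
def otherE {G : SimpleGraph V} [DecidableRel G.Adj] (p : Ehat G) : Ehat G :=
  ⟨(p.val.1, Sym2.Mem.other' p.prop.2), ⟨p.prop.1, Sym2.other_mem' p.prop.2⟩⟩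

/-- The complete graph `K₄` on vertices `{0,1,2,3}` with the edge `{0,2}` removed
(in the paper's labelling `{1,2,3,4}`, the edge `{1,3}` is removed, leaving the edges
`(1,2), (2,3), (3,4), (4,1), (4,2)`). -/
def K4minus : SimpleGraph (Fin 4) where
  Adj v w := v ≠ w ∧ s(v, w) ≠ s((0 : Fin 4), (2 : Fin 4))
  symm := by
    constructor
    intro v w h
    exact ⟨h.1.symm, by rw [Sym2.eq_swap]; exact h.2⟩
  loopless := ⟨fun v h => h.1 rfl⟩

instance : DecidableRel K4minus.Adj := fun v w =>
  inferInstanceAs (Decidable (v ≠ w ∧ s(v, w) ≠ s((0 : Fin 4), (2 : Fin 4))))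

set_option linter.unusedSectionVars false
set_option maxHeartbeats 1000000
set_option maxRecDepth 4000

section Aux

variable {G : SimpleGraph V} [DecidableRel G.Adj]

lemma vertex_otherE_ne (p : Ehat G) : (otherE p).val.2 ≠ p.val.2 := by
  have := Sym2.other_ne (G.not_isDiag_of_mem_edgeSet p.prop.1) p.prop.2
  rw [Sym2.other_eq_other'] at this
  exact this

lemma otherE_ne (p : Ehat G) : otherE p ≠ p := fun h => vertex_otherE_ne p (by rw [h])

lemma otherE_otherE (p : Ehat G) : otherE (otherE p) = p :=
  Subtype.ext (Prod.ext_iff.mpr ⟨rfl, Sym2.other_invol' p.prop.2 _⟩)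

lemma eq_or_eq_otherE {p p' : Ehat G} (h : p'.val.1 = p.val.1) : p' = p ∨ p' = otherE p := by
  have hm : p'.val.2 ∈ p.val.1 := h ▸ p'.prop.2
  rw [← Sym2.other_spec' p.prop.2, Sym2.mem_iff] at hm
  rcases hm with h2 | h2
  · exact Or.inl (Subtype.ext (Prod.ext_iff.mpr ⟨h, h2⟩))
  · exact Or.inr (Subtype.ext (Prod.ext_iff.mpr ⟨h, h2⟩))

lemma diag_inv {n : Type*} [Fintype n] [DecidableEq n] (f : n → ℝ) (hf : ∀ p, f p ≠ 0) :
    (Matrix.diagonal f)⁻¹ = Matrix.diagonal fun p => (f p)⁻¹ := by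
  refine Matrix.inv_eq_right_inv ?_
  rw [Matrix.diagonal_mul_diagonal]
  have h : (fun i => f i * (f i)⁻¹) = fun _ => (1:ℝ) := funext fun p => mul_inv_cancel₀ (hf p)
  rw [h, Matrix.diagonal_one]

end Aux

/-- The vertex weights `σ_v = ∑_{(e,v) ∈ Ê} ρ_{(e,v)}`. -/
def sigE (ρ : Ehat K4minus → ℝ) (v : Fin 4) : ℝ :=
  ∑ p : Ehat K4minus, if p.val.2 = v then ρ p else 0

/-- Denominator of the 2×2 block inverse. -/
def Dfun (ρ : Ehat K4minus → ℝ) (p : Ehat K4minus) : ℝ :=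
  ρ p * ρ (otherE p) + ρ p + ρ (otherE p)

/-- Explicit formula for `A = (I + Dρ⁻¹ Q)⁻¹`. -/
def Aexp (ρ : Ehat K4minus → ℝ) : Matrix (Ehat K4minus) (Ehat K4minus) ℝ :=
  fun p p' =>
    if p' = p then ρ p * (ρ (otherE p) + 1) / Dfun ρ p
    else if p' = otherE p then ρ (otherE p) / Dfun ρ p else 0

/-- Explicit formula for `B`. -/
def Bexp (ρ : Ehat K4minus → ℝ) : Matrix (Ehat K4minus) (Ehat K4minus) ℝ :=
  fun p p' => if p'.val.2 = p.val.2 then (sigE ρ p.val.2)⁻¹ * ρ p' else 0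

/-- Explicit formula for `B * A`. -/
def BAexp (ρ : Ehat K4minus → ℝ) : Matrix (Ehat K4minus) (Ehat K4minus) ℝ :=
  fun p p' =>
    (if p'.val.2 = p.val.2 then
      ((sigE ρ p.val.2)⁻¹ * ρ p') * (ρ p' * (ρ (otherE p') + 1) / Dfun ρ p') else 0)
    + (if (otherE p').val.2 = p.val.2 then
      ((sigE ρ p.val.2)⁻¹ * ρ (otherE p')) * (ρ p' / Dfun ρ p') else 0)

variable {ρ : Ehat K4minus → ℝ}

lemma Dfun_pos (hρ : ∀ p, 0 < ρ p) (p : Ehat K4minus) : 0 < Dfun ρ p := by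
  have h1 := hρ p; have h2 := hρ (otherE p)
  unfold Dfun; nlinarith

lemma Dfun_otherE (p : Ehat K4minus) : Dfun ρ (otherE p) = Dfun ρ p := by
  unfold Dfun; rw [otherE_otherE]; ring

lemma sigE_pos (hρ : ∀ p, 0 < ρ p) (v : Fin 4) : 0 < sigE ρ v := by
  obtain ⟨p, hp⟩ : ∃ p : Ehat K4minus, p.val.2 = v := by revert v; decide
  have hle : ρ p ≤ sigE ρ v := by
    have := Finset.single_le_sum
      (f := fun q : Ehat K4minus => if q.val.2 = v then ρ q else 0)
      (fun q _ => by split <;> [exact (hρ q).le; exact le_refl 0])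
      (Finset.mem_univ p)
    simpa [hp, sigE] using this
  exact lt_of_lt_of_le (hρ p) hle

lemma scalar1 (a b : ℝ) (ha : a ≠ 0) (hD : a * b + a + b ≠ 0) :
    (1 + a⁻¹) * (a * (b + 1) / (a * b + a + b)) + -a⁻¹ * (a / (a * b + a + b)) = 1 := by
  rw [div_eq_mul_inv, div_eq_mul_inv]
  linear_combination (mul_inv_cancel₀ hD) + b * (a * b + a + b)⁻¹ * (mul_inv_cancel₀ ha)

lemma scalar2 (a b : ℝ) (ha : a ≠ 0) (hD : a * b + a + b ≠ 0) :
    (1 + a⁻¹) * (b / (a * b + a + b)) + -a⁻¹ * (b * (a + 1) / (a * b + a + b)) = 0 := by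
  field_simp
  ring

lemma Aexp_self (p : Ehat K4minus) :
    Aexp ρ p p = ρ p * (ρ (otherE p) + 1) / Dfun ρ p := by
  simp [Aexp]

lemma Aexp_other (p : Ehat K4minus) :
    Aexp ρ p (otherE p) = ρ (otherE p) / Dfun ρ p := by
  simp [Aexp, otherE_ne p]

lemma Aexp_zero {p q : Ehat K4minus} (h1 : q ≠ p) (h2 : q ≠ otherE p) :
    Aexp ρ p q = 0 := by
  simp only [Aexp]
  rw [if_neg h1, if_neg h2]

lemma Aexp_other_self (p : Ehat K4minus) :
    Aexp ρ (otherE p) p = ρ p / Dfun ρ p := by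
  have h := Aexp_other (ρ := ρ) (otherE p)
  rw [otherE_otherE, Dfun_otherE] at h
  exact h

lemma Aexp_other_other (p : Ehat K4minus) :
    Aexp ρ (otherE p) (otherE p) = ρ (otherE p) * (ρ p + 1) / Dfun ρ p := by
  have h := Aexp_self (ρ := ρ) (otherE p)
  rw [otherE_otherE, Dfun_otherE] at h
  exact h

lemma A_eq (hρ : ∀ p, 0 < ρ p) :
    (1 + (Matrix.diagonal ρ)⁻¹ * Qmat K4minus (fun _ => 1))⁻¹ = Aexp ρ := by
  rw [diag_inv ρ (fun p => (hρ p).ne')]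
  refine Matrix.inv_eq_right_inv ?_
  ext p p''
  rw [Matrix.mul_apply]
  rw [← Finset.sum_subset (Finset.subset_univ ({p, otherE p} : Finset (Ehat K4minus)))
    (fun p' _ hmem => ?_)]
  · rw [Finset.sum_pair (otherE_ne p).symm]
    have hQ1 : Qmat K4minus (fun _ => 1) p p = 1 := by
      simp [Qmat]
    have hQ2 : Qmat K4minus (fun _ => 1) p (otherE p) = -1 := by
      simp only [Qmat]
      rw [if_pos (show p.val.1 = (otherE p).val.1 from rfl),
        if_neg (Ne.symm (vertex_otherE_ne p))]
    have hM1 : (1 + Matrix.diagonal (fun q => (ρ q)⁻¹) * Qmat K4minus (fun _ => 1)) p p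
        = 1 + (ρ p)⁻¹ := by
      rw [Matrix.add_apply, Matrix.one_apply_eq, Matrix.diagonal_mul, hQ1, mul_one]
    have hM2 : (1 + Matrix.diagonal (fun q => (ρ q)⁻¹) * Qmat K4minus (fun _ => 1)) p (otherE p)
        = -(ρ p)⁻¹ := by
      rw [Matrix.add_apply, Matrix.one_apply_ne (Ne.symm (otherE_ne p)),
        Matrix.diagonal_mul, hQ2]
      ring
    rw [hM1, hM2]
    have hD := (Dfun_pos hρ p).ne'
    have hρp := (hρ p).ne'
    by_cases h1 : p'' = p
    · rw [h1, Matrix.one_apply_eq, Aexp_self, Aexp_other_self]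
      simp only [Dfun]
      exact scalar1 _ _ hρp (by simp only [Dfun] at hD; exact hD)
    · rw [Matrix.one_apply_ne (Ne.symm h1)]
      by_cases h2 : p'' = otherE p
      · rw [h2, Aexp_other, Aexp_other_other]
        simp only [Dfun]
        exact scalar2 _ _ hρp (by simp only [Dfun] at hD; exact hD)
      · rw [Aexp_zero h1 h2, Aexp_zero h2 (by rw [otherE_otherE]; exact h1)]
        ring
  · simp only [Finset.mem_insert, Finset.mem_singleton, not_or] at hmem
    have hedge : p.val.1 ≠ p'.val.1 := by
      intro h
      rcases eq_or_eq_otherE h.symm with h' | h'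
      · exact hmem.1 h'
      · exact hmem.2 h'
    have hz : (1 + Matrix.diagonal (fun q => (ρ q)⁻¹) * Qmat K4minus (fun _ => 1)) p p' = 0 := by
      rw [Matrix.add_apply, Matrix.one_apply_ne (fun h => hmem.1 h.symm),
        Matrix.diagonal_mul]
      have hQ : Qmat K4minus (fun _ => 1) p p' = 0 := by
        simp only [Qmat]; rw [if_neg hedge]
      rw [hQ, mul_zero, add_zero]
    rw [hz, zero_mul]

lemma SDS_eq : (Smat K4minus)ᵀ * Matrix.diagonal ρ * Smat K4minus
    = Matrix.diagonal (sigE ρ) := by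
  ext v w
  rw [Matrix.mul_apply]
  by_cases h : v = w
  · subst h
    rw [Matrix.diagonal_apply_eq]
    unfold sigE
    refine Finset.sum_congr rfl fun p _ => ?_
    simp only [Matrix.mul_diagonal, Matrix.transpose_apply, Smat]
    split_ifs <;> ring
  · rw [Matrix.diagonal_apply_ne _ h]
    refine Finset.sum_eq_zero fun p _ => ?_
    simp only [Matrix.mul_diagonal, Matrix.transpose_apply, Smat]
    split_ifs with h1 h2
    · exact absurd (h1 ▸ h2) h
    all_goals ring

lemma B_eq (hρ : ∀ p, 0 < ρ p) :
    Smat K4minus * ((Smat K4minus)ᵀ * Matrix.diagonal ρ * Smat K4minus)⁻¹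
      * (Smat K4minus)ᵀ * Matrix.diagonal ρ = Bexp ρ := by
  rw [SDS_eq, diag_inv (sigE ρ) (fun v => (sigE_pos hρ v).ne')]
  ext p p'
  rw [Matrix.mul_diagonal, Matrix.mul_apply]
  have hterm : ∀ v : Fin 4,
      (Smat K4minus * Matrix.diagonal fun u => (sigE ρ u)⁻¹) p v * (Smat K4minus)ᵀ v p'
      = (if p.val.2 = v then 1 else 0) * (sigE ρ v)⁻¹ * (if p'.val.2 = v then 1 else 0) := by
    intro v
    rw [Matrix.mul_diagonal, Matrix.transpose_apply]
    simp only [Smat]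
  simp only [hterm]
  rw [Finset.sum_eq_single p.val.2 (fun v _ hv => by rw [if_neg (fun h => hv h.symm)]; ring)
    (fun h => absurd (Finset.mem_univ _) h)]
  rw [if_pos rfl]
  simp only [Bexp]
  split_ifs <;> ring

lemma BA_eq (hρ : ∀ p, 0 < ρ p) : Bexp ρ * Aexp ρ = BAexp ρ := by
  ext p p''
  rw [Matrix.mul_apply]
  rw [← Finset.sum_subset (Finset.subset_univ ({p'', otherE p''} : Finset (Ehat K4minus)))
    (fun p' _ hmem => ?_)]
  · rw [Finset.sum_pair (otherE_ne p'').symm]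
    rw [Aexp_self, Aexp_other_self]
    simp only [BAexp, Bexp]
    split_ifs <;> ring
  · simp only [Finset.mem_insert, Finset.mem_singleton, not_or] at hmem
    have hz : Aexp ρ p' p'' = 0 := by
      refine Aexp_zero (fun h => hmem.1 h.symm) fun h => hmem.2 ?_
      rw [h, otherE_otherE]
    rw [hz, mul_zero]


lemma key_min (hρ : ∀ p, 0 < ρ p) : ∃ p : Ehat K4minus, 2 * ρ p < sigE ρ p.val.2 := by
  obtain ⟨p₁, p₂, p₃, h12, h13, h23, hv2, hv3⟩ :
      ∃ p₁ p₂ p₃ : Ehat K4minus, p₁ ≠ p₂ ∧ p₁ ≠ p₃ ∧ p₂ ≠ p₃ ∧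
        p₂.val.2 = p₁.val.2 ∧ p₃.val.2 = p₁.val.2 := by decide
  have key : ∀ p q r : Ehat K4minus, p ≠ q → p ≠ r → q ≠ r →
      q.val.2 = p.val.2 → r.val.2 = p.val.2 → ρ p ≤ ρ q → ρ p ≤ ρ r →
      2 * ρ p < sigE ρ p.val.2 := by
    intro p q r hpq hpr hqr hq hr h1 h2
    have hsub : ∑ x ∈ ({p, q, r} : Finset (Ehat K4minus)),
        (if x.val.2 = p.val.2 then ρ x else 0) ≤ sigE ρ p.val.2 := by
      refine Finset.sum_le_sum_of_subset_of_nonneg (Finset.subset_univ _) fun x _ _ => ?_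
      split <;> [exact (hρ x).le; exact le_refl 0]
    have hsum : ∑ x ∈ ({p, q, r} : Finset (Ehat K4minus)),
        (if x.val.2 = p.val.2 then ρ x else 0) = ρ p + ρ q + ρ r := by
      rw [Finset.sum_insert (by simp [hpq, hpr]), Finset.sum_pair hqr]
      rw [if_pos rfl, if_pos hq, if_pos hr]
      ring
    have := hρ q; have := hρ r
    rw [hsum] at hsub
    linarith
  rcases le_total (ρ p₁) (ρ p₂) with h12' | h12'
  · rcases le_total (ρ p₁) (ρ p₃) with h13' | h13'
    · exact ⟨p₁, key p₁ p₂ p₃ h12 h13 h23 hv2 hv3 h12' h13'⟩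
    · exact ⟨p₃, key p₃ p₁ p₂ (Ne.symm h13) (Ne.symm h23) h12 hv3.symm
        (hv2.trans hv3.symm) h13' (h13'.trans h12')⟩
  · rcases le_total (ρ p₂) (ρ p₃) with h23' | h23'
    · exact ⟨p₂, key p₂ p₁ p₃ (Ne.symm h12) h23 h13 hv2.symm (hv3.trans hv2.symm) h12' h23'⟩
    · exact ⟨p₃, key p₃ p₁ p₂ (Ne.symm h13) (Ne.symm h23) h12 hv3.symm
        (hv2.trans hv3.symm) (h23'.trans h12') h23'⟩


/-- **Negative probabilities.**
For `G = K₄` minus one edge with unit weights, if the two penalty parameters attached to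
vertex `2` (paper labelling) along the edges `(1,2)` and `(2,3)` differ, then for every
`γ ∈ (0,2)` and every diagonal `D_A` with all diagonal entries different from `1`, the
matrix `M_A = (I-D_A)⁻¹(T_A-D_A)` has at least one strictly negative entry; in particular
it is not a probability transition matrix. -/
theorem MA_negative_entry
    (ρ : Ehat K4minus → ℝ) (hρ : ∀ p, 0 < ρ p)
    (hρne : ρ ⟨(s((0 : Fin 4), (1 : Fin 4)), (1 : Fin 4)), by decide⟩
          ≠ ρ ⟨(s((1 : Fin 4), (2 : Fin 4)), (1 : Fin 4)), by decide⟩)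
    (γ : ℝ) (hγ : γ ∈ Set.Ioo (0 : ℝ) 2)
    (DA : Ehat K4minus → ℝ) (hDA : ∀ p, DA p ≠ 1) :
    let S := Smat K4minus
    let Q := Qmat K4minus (fun _ => 1)
    let Dρ := Matrix.diagonal ρ
    let A := (1 + Dρ⁻¹ * Q)⁻¹
    let B := S * (Sᵀ * Dρ * S)⁻¹ * Sᵀ * Dρ
    let TA := 1 - γ • (A + B - (2 : ℝ) • (B * A))
    let MA := (1 - Matrix.diagonal DA)⁻¹ * (TA - Matrix.diagonal DA)
    ∃ p p' : Ehat K4minus, MA p p' < 0 := by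
  have hγ0 : 0 < γ := hγ.1
  have hDinv : (1 - Matrix.diagonal DA)⁻¹
      = Matrix.diagonal (fun q : Ehat K4minus => (1 - DA q)⁻¹) := by
    have h1 : (1 : Matrix (Ehat K4minus) (Ehat K4minus) ℝ) - Matrix.diagonal DA
        = Matrix.diagonal (fun q => 1 - DA q) := by
      rw [← Matrix.diagonal_one, Matrix.diagonal_sub]
    rw [h1]
    exact diag_inv _ (fun q => sub_ne_zero.mpr (Ne.symm (hDA q)))
  show ∃ p p' : Ehat K4minus,
    (((1 - Matrix.diagonal DA)⁻¹ *
      ((1 - γ • ((1 + (Matrix.diagonal ρ)⁻¹ * Qmat K4minus (fun _ => 1))⁻¹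
        + Smat K4minus * ((Smat K4minus)ᵀ * Matrix.diagonal ρ * Smat K4minus)⁻¹
            * (Smat K4minus)ᵀ * Matrix.diagonal ρ
        - (2 : ℝ) • (Smat K4minus * ((Smat K4minus)ᵀ * Matrix.diagonal ρ * Smat K4minus)⁻¹
            * (Smat K4minus)ᵀ * Matrix.diagonal ρ
          * (1 + (Matrix.diagonal ρ)⁻¹ * Qmat K4minus (fun _ => 1))⁻¹)))
       - Matrix.diagonal DA)) : Matrix (Ehat K4minus) (Ehat K4minus) ℝ) p p' < 0
  rw [A_eq hρ, B_eq hρ, BA_eq hρ, hDinv]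
  have hMA : ∀ q q' : Ehat K4minus, q ≠ q' →
      (Matrix.diagonal (fun r : Ehat K4minus => (1 - DA r)⁻¹) *
        ((1 - γ • (Aexp ρ + Bexp ρ - (2 : ℝ) • BAexp ρ)) - Matrix.diagonal DA)) q q'
      = (1 - DA q)⁻¹ *
        (-(γ * (Aexp ρ q q' + Bexp ρ q q' - 2 * BAexp ρ q q'))) := by
    intro q q' hne
    rw [Matrix.diagonal_mul, Matrix.sub_apply, Matrix.diagonal_apply_ne _ hne, sub_zero,
      Matrix.sub_apply, Matrix.one_apply_ne hne, Matrix.smul_apply, Matrix.sub_apply,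
      Matrix.add_apply, Matrix.smul_apply, smul_eq_mul, smul_eq_mul]
    ring
  by_cases hcase : ∀ q, DA q < 1
  · -- all diagonal entries below 1 : find a positive off-diagonal entry of X
    obtain ⟨p, hp⟩ := key_min hρ
    refine ⟨p, otherE p, ?_⟩
    have hne : p ≠ otherE p := (otherE_ne p).symm
    rw [hMA p (otherE p) hne]
    have hBe : Bexp ρ p (otherE p) = 0 := by
      simp only [Bexp]; rw [if_neg (vertex_otherE_ne p)]
    have hBAe : BAexp ρ p (otherE p)
        = (sigE ρ p.val.2)⁻¹ * ρ p * (ρ (otherE p) / Dfun ρ p) := by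
      simp only [BAexp]
      rw [if_neg (vertex_otherE_ne p), otherE_otherE, Dfun_otherE,
        if_pos (rfl : p.val.2 = p.val.2)]
      ring
    rw [Aexp_other, hBe, hBAe]
    have hσ := sigE_pos hρ p.val.2
    have hD := Dfun_pos hρ p
    have hrp := hρ p
    have hrop := hρ (otherE p)
    have hfac : 0 < 1 - 2 * (ρ p * (sigE ρ p.val.2)⁻¹) := by
      nlinarith [mul_lt_mul_of_pos_right hp (inv_pos.mpr hσ), mul_inv_cancel₀ hσ.ne']
    have hX : 0 < ρ (otherE p) / Dfun ρ p
        * (1 - 2 * (ρ p * (sigE ρ p.val.2)⁻¹)) :=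
      mul_pos (div_pos hrop hD) hfac
    have h1DA : 0 < (1 - DA p)⁻¹ := inv_pos.mpr (by linarith [hcase p])
    have hneg : -(γ * (ρ (otherE p) / Dfun ρ p + 0 -
        2 * ((sigE ρ p.val.2)⁻¹ * ρ p * (ρ (otherE p) / Dfun ρ p)))) < 0 := by
      have heq : ρ (otherE p) / Dfun ρ p + 0 -
          2 * ((sigE ρ p.val.2)⁻¹ * ρ p * (ρ (otherE p) / Dfun ρ p))
          = ρ (otherE p) / Dfun ρ p * (1 - 2 * (ρ p * (sigE ρ p.val.2)⁻¹)) := by ring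
      rw [heq]
      nlinarith [mul_pos hγ0 hX]
    exact mul_neg_of_pos_of_neg h1DA hneg
  · -- some diagonal entry exceeds 1
    push_neg at hcase
    obtain ⟨p₀, hp₀⟩ := hcase
    have hDA0 : 1 < DA p₀ := lt_of_le_of_ne hp₀ (Ne.symm (hDA p₀))
    have hexists : ∀ p : Ehat K4minus, ∃ p' : Ehat K4minus,
        p'.val.2 ≠ p.val.2 ∧ (otherE p').val.2 = p.val.2 ∧ p'.val.1 ≠ p.val.1 := by decide
    obtain ⟨p', hv, hov, he⟩ := hexists p₀
    refine ⟨p₀, p', ?_⟩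
    have hne : p₀ ≠ p' := fun h => hv (by rw [h])
    rw [hMA p₀ p' hne]
    have hAe : Aexp ρ p₀ p' = 0 := by
      refine Aexp_zero (Ne.symm hne) fun h => he (by rw [h]; rfl)
    have hBe : Bexp ρ p₀ p' = 0 := by simp only [Bexp]; rw [if_neg hv]
    have hBAe : BAexp ρ p₀ p'
        = (sigE ρ p₀.val.2)⁻¹ * ρ (otherE p') * (ρ p' / Dfun ρ p') := by
      simp only [BAexp]
      rw [if_neg hv, if_pos hov]
      ring
    rw [hAe, hBe, hBAe]
    have hσ := sigE_pos hρ p₀.val.2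
    have hpos : 0 < (sigE ρ p₀.val.2)⁻¹ * ρ (otherE p') * (ρ p' / Dfun ρ p') :=
      mul_pos (mul_pos (inv_pos.mpr hσ) (hρ (otherE p')))
        (div_pos (hρ p') (Dfun_pos hρ p'))
    have h1DA : (1 - DA p₀)⁻¹ < 0 := inv_lt_zero.mpr (by linarith)
    have hneg : 0 < -(γ * (0 + 0 -
        2 * ((sigE ρ p₀.val.2)⁻¹ * ρ (otherE p') * (ρ p' / Dfun ρ p')))) := by
      nlinarith [mul_pos hγ0 hpos]
    exact mul_neg_of_neg_of_pos h1DA hneg
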